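/- (Optimal policy of discrete-time exploratory MV) In the backward recursion of the exploratory mean-variance problem, the minimizing density at time t and state x is the Gaussian with mean -a r_f (x - r_f^{-(T-t)} w)/(a²+σ²) and variance (λ/(2(a²+σ²))) · ((a²+σ²)/(σ²r_f²))^{T-t-1}. -/

import Mathlib

open MeasureTheory Real Filter

lemma tendsto_exp_neg_sq (b : ℝ) (hb : 0 < b) :
    Tendsto (fun x : ℝ => Real.exp (-b * x ^ 2)) atTop (nhds 0) :=
  Real.tendsto_exp_atBot.comp
    ((tendsto_pow_atTop two_ne_zero).const_mul_atTop_of_neg (neg_lt_zero.2 hb))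

lemma tendsto_exp_neg_sq_bot (b : ℝ) (hb : 0 < b) :
    Tendsto (fun x : ℝ => Real.exp (-b * x ^ 2)) atBot (nhds 0) := by
  have h := (tendsto_exp_neg_sq b hb).comp tendsto_neg_atBot_atTop
  simpa [Function.comp_def] using h

lemma tendsto_mul_exp_neg_sq (b : ℝ) (hb : 0 < b) :
    Tendsto (fun x : ℝ => x * Real.exp (-b * x ^ 2)) atTop (nhds 0) := by
  have h := (rpow_mul_exp_neg_mul_sq_isLittleO_exp_neg hb 1).isBigO.trans_tendsto
    (Real.tendsto_exp_atBot.comp (tendsto_id.const_mul_atTop_of_neg (by norm_num : (-(1/2):ℝ) < 0)))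
  simpa [Real.rpow_one, Function.comp_def] using h

lemma tendsto_mul_exp_neg_sq_bot (b : ℝ) (hb : 0 < b) :
    Tendsto (fun x : ℝ => x * Real.exp (-b * x ^ 2)) atBot (nhds 0) := by
  have h := (tendsto_mul_exp_neg_sq b hb).comp tendsto_neg_atBot_atTop
  have h2 : Tendsto (fun x : ℝ => -(x * Real.exp (-b * x ^ 2))) atBot (nhds 0) := by
    simpa [Function.comp_def] using h
  simpa using h2.neg

lemma integrable_sq_mul_exp_neg_sq (b : ℝ) (hb : 0 < b) :
    Integrable (fun x : ℝ => x ^ 2 * Real.exp (-b * x ^ 2)) := by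
  have := integrable_rpow_mul_exp_neg_mul_sq hb (s := 2) (by norm_num)
  simpa [Real.rpow_natCast] using this

lemma integral_mul_exp_neg_sq (b : ℝ) (hb : 0 < b) :
    ∫ x : ℝ, x * Real.exp (-b * x ^ 2) = 0 := by
  have hd : ∀ x : ℝ, HasDerivAt (fun x : ℝ => -(2 * b)⁻¹ * Real.exp (-b * x ^ 2))
      (x * Real.exp (-b * x ^ 2)) x := by
    intro x
    refine (((hasDerivAt_pow 2 x).const_mul (-b)).exp.const_mul (-(2 * b)⁻¹)).congr_deriv ?_
    field_simp
    ring
  have := integral_of_hasDerivAt_of_tendsto hd (integrable_mul_exp_neg_mul_sq hb)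
    (((tendsto_exp_neg_sq_bot b hb).const_mul (-(2 * b)⁻¹)).congr (fun x => rfl) |>.mono_left le_rfl |> (by simpa using ·))
    (by simpa using (tendsto_exp_neg_sq b hb).const_mul (-(2 * b)⁻¹))
  simpa using this

lemma integral_sq_mul_exp_neg_sq (b : ℝ) (hb : 0 < b) :
    ∫ x : ℝ, x ^ 2 * Real.exp (-b * x ^ 2) = (2 * b)⁻¹ * Real.sqrt (π / b) := by
  have hd : ∀ x : ℝ, HasDerivAt (fun x : ℝ => -(2 * b)⁻¹ * (x * Real.exp (-b * x ^ 2)))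
      (x ^ 2 * Real.exp (-b * x ^ 2) - (2 * b)⁻¹ * Real.exp (-b * x ^ 2)) x := by
    intro x
    have h1 : HasDerivAt (fun x : ℝ => x * Real.exp (-b * x ^ 2))
        (1 * Real.exp (-b * x ^ 2) + x * (Real.exp (-b * x ^ 2) * (-b * (2 * x ^ 1)))) x :=
      (hasDerivAt_id x).mul (((hasDerivAt_pow 2 x).const_mul (-b)).exp)
    refine (h1.const_mul (-(2 * b)⁻¹)).congr_deriv ?_
    field_simp
    ring
  have hint : Integrable (fun x : ℝ =>
      x ^ 2 * Real.exp (-b * x ^ 2) - (2 * b)⁻¹ * Real.exp (-b * x ^ 2)) :=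
    (integrable_sq_mul_exp_neg_sq b hb).sub ((integrable_exp_neg_mul_sq hb).const_mul _)
  have h0 := integral_of_hasDerivAt_of_tendsto hd hint
    (by simpa using (tendsto_mul_exp_neg_sq_bot b hb).const_mul (-(2 * b)⁻¹))
    (by simpa using (tendsto_mul_exp_neg_sq b hb).const_mul (-(2 * b)⁻¹))
  rw [integral_sub (integrable_sq_mul_exp_neg_sq b hb)
    ((integrable_exp_neg_mul_sq hb).const_mul _), integral_const_mul,
    integral_gaussian] at h0
  linarith

/-- Gaussian density with mean `m` and variance `s2`. -/
noncomputable def gaussPdf (m s2 u : ℝ) : ℝ :=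
  (Real.sqrt (2 * Real.pi * s2))⁻¹ * Real.exp (-(u - m) ^ 2 / (2 * s2))

section gauss
variable {m s2 : ℝ} (hs2 : 0 < s2)

lemma gaussPdf_eq (u : ℝ) :
    gaussPdf m s2 u = (Real.sqrt (2 * π * s2))⁻¹ * Real.exp (-(2 * s2)⁻¹ * ((u - m) ^ 2)) := by
  rw [gaussPdf]; ring_nf

lemma gaussPdf_nonneg (u : ℝ) : 0 ≤ gaussPdf m s2 u :=
  mul_nonneg (inv_nonneg.2 (Real.sqrt_nonneg _)) (Real.exp_pos _).le

include hs2

lemma gaussPdf_pos (u : ℝ) : 0 < gaussPdf m s2 u := by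
  rw [gaussPdf_eq]
  exact mul_pos (inv_pos.2 (Real.sqrt_pos.2 (by positivity))) (Real.exp_pos _)

lemma hb_pos : (0:ℝ) < (2 * s2)⁻¹ := by positivity

/-- generic reduction to centered integrals -/
lemma gauss_shift (f : ℝ → ℝ) :
    (∫ u, f (u - m) * gaussPdf m s2 u) =
      (Real.sqrt (2 * π * s2))⁻¹ * ∫ y, f y * Real.exp (-(2 * s2)⁻¹ * y ^ 2) := by
  have h : (fun u => f (u - m) * gaussPdf m s2 u) =
      fun u => (fun y => (Real.sqrt (2 * π * s2))⁻¹ * (f y * Real.exp (-(2 * s2)⁻¹ * y ^ 2))) (u - m) := by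
    funext u; rw [gaussPdf_eq]; ring
  rw [h, integral_sub_right_eq_self (fun y => (Real.sqrt (2 * π * s2))⁻¹ * (f y * Real.exp (-(2 * s2)⁻¹ * y ^ 2))) m, integral_const_mul]

lemma gauss_shift_integrable {f : ℝ → ℝ}
    (hf : Integrable (fun y => f y * Real.exp (-(2 * s2)⁻¹ * y ^ 2))) :
    Integrable (fun u => f (u - m) * gaussPdf m s2 u) := by
  have h : (fun u => f (u - m) * gaussPdf m s2 u) =
      fun u => (fun y => (Real.sqrt (2 * π * s2))⁻¹ * (f y * Real.exp (-(2 * s2)⁻¹ * y ^ 2))) (u - m) := by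
    funext u; rw [gaussPdf_eq]; ring
  rw [h]
  exact (hf.const_mul _).comp_sub_right m

lemma sqrt_fact : (Real.sqrt (2 * π * s2))⁻¹ * Real.sqrt (π / (2 * s2)⁻¹) = 1 := by
  have h : π / (2 * s2)⁻¹ = 2 * π * s2 := by field_simp
  rw [h]
  exact inv_mul_cancel₀ (ne_of_gt (Real.sqrt_pos.2 (by positivity)))

end gauss

set_option linter.unusedSectionVars false

section gauss2
variable {m s2 : ℝ} (hs2 : 0 < s2)
include hs2

lemma gauss_integrable : Integrable (gaussPdf m s2) := by
  have := gauss_shift_integrable (m := m) (s2 := s2) hs2 (f := fun _ => (1:ℝ))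
    (by simpa using integrable_exp_neg_mul_sq (hb_pos hs2))
  simpa using this

lemma gauss_integral : (∫ u, gaussPdf m s2 u) = 1 := by
  have h := gauss_shift (m := m) (s2 := s2) hs2 (fun _ => (1:ℝ))
  simp only [one_mul] at h
  rw [h, integral_gaussian]
  exact sqrt_fact hs2

lemma gauss_integrable_mul : Integrable (fun u => u * gaussPdf m s2 u) := by
  have h1 := integrable_mul_exp_neg_mul_sq (hb_pos (s2 := s2) hs2)
  have h2 := (integrable_exp_neg_mul_sq (hb_pos (s2 := s2) hs2)).const_mul m
  have hi : Integrable (fun y => (y + m) * Real.exp (-(2 * s2)⁻¹ * y ^ 2)) := by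
    refine (h1.add h2).congr ?_
    filter_upwards with y
    simp only [Pi.add_apply]; ring
  have := gauss_shift_integrable (m := m) (s2 := s2) hs2 (f := fun y => y + m) hi
  refine this.congr ?_
  filter_upwards with u
  beta_reduce
  ring_nf

lemma gauss_integral_mul : (∫ u, u * gaussPdf m s2 u) = m := by
  have h0 := gauss_shift (m := m) hs2 (fun y => y + m)
  beta_reduce at h0
  have h1 : (∫ u, u * gaussPdf m s2 u) = ∫ u, (u - m + m) * gaussPdf m s2 u := by
    congr 1; funext u; ring_nf
  rw [h1, h0]
  have hadd : (∫ y, (y + m) * Real.exp (-(2 * s2)⁻¹ * y ^ 2))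
      = (∫ y, y * Real.exp (-(2 * s2)⁻¹ * y ^ 2))
        + m * ∫ y, Real.exp (-(2 * s2)⁻¹ * y ^ 2) := by
    have hfun : (fun y : ℝ => (y + m) * Real.exp (-(2 * s2)⁻¹ * y ^ 2))
        = fun y => y * Real.exp (-(2 * s2)⁻¹ * y ^ 2) + m * Real.exp (-(2 * s2)⁻¹ * y ^ 2) := by
      funext y; ring
    rw [hfun, integral_add (integrable_mul_exp_neg_mul_sq (hb_pos hs2))
      ((integrable_exp_neg_mul_sq (hb_pos hs2)).const_mul m), integral_const_mul]
  rw [hadd, integral_mul_exp_neg_sq _ (hb_pos hs2), integral_gaussian, zero_add,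
    ← mul_assoc, mul_comm ((Real.sqrt (2 * π * s2))⁻¹) m, mul_assoc, sqrt_fact hs2, mul_one]

lemma gauss_integrable_sq : Integrable (fun u => u ^ 2 * gaussPdf m s2 u) := by
  have h1 := integrable_sq_mul_exp_neg_sq _ (hb_pos (s2 := s2) hs2)
  have h2 := (integrable_mul_exp_neg_mul_sq (hb_pos (s2 := s2) hs2)).const_mul (2*m)
  have h3 := (integrable_exp_neg_mul_sq (hb_pos (s2 := s2) hs2)).const_mul (m^2)
  have hi : Integrable (fun y => (y + m) ^ 2 * Real.exp (-(2 * s2)⁻¹ * y ^ 2)) := by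
    refine ((h1.add h2).add h3).congr ?_
    filter_upwards with y
    simp only [Pi.add_apply]; ring
  have := gauss_shift_integrable (m := m) (s2 := s2) hs2 (f := fun y => (y + m) ^ 2) hi
  refine this.congr ?_
  filter_upwards with u
  beta_reduce
  ring_nf

lemma gauss_integral_sq : (∫ u, u ^ 2 * gaussPdf m s2 u) = s2 + m ^ 2 := by
  have h0 := gauss_shift (m := m) hs2 (fun y => (y + m) ^ 2)
  beta_reduce at h0
  have h1 : (∫ u, u ^ 2 * gaussPdf m s2 u) = ∫ u, (u - m + m) ^ 2 * gaussPdf m s2 u := by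
    congr 1; funext u; ring_nf
  rw [h1, h0]
  have hadd : (∫ y, (y + m) ^ 2 * Real.exp (-(2 * s2)⁻¹ * y ^ 2))
      = ((∫ y, y ^ 2 * Real.exp (-(2 * s2)⁻¹ * y ^ 2))
        + (2 * m) * ∫ y, y * Real.exp (-(2 * s2)⁻¹ * y ^ 2))
        + m ^ 2 * ∫ y, Real.exp (-(2 * s2)⁻¹ * y ^ 2) := by
    have h12 : Integrable (fun y : ℝ => y ^ 2 * Real.exp (-(2 * s2)⁻¹ * y ^ 2)
        + 2 * m * (y * Real.exp (-(2 * s2)⁻¹ * y ^ 2))) :=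
      (integrable_sq_mul_exp_neg_sq _ (hb_pos hs2)).add
        ((integrable_mul_exp_neg_mul_sq (hb_pos hs2)).const_mul (2 * m))
    have hfun : (fun y : ℝ => (y + m) ^ 2 * Real.exp (-(2 * s2)⁻¹ * y ^ 2))
        = fun y => (y ^ 2 * Real.exp (-(2 * s2)⁻¹ * y ^ 2)
            + 2 * m * (y * Real.exp (-(2 * s2)⁻¹ * y ^ 2)))
          + m ^ 2 * Real.exp (-(2 * s2)⁻¹ * y ^ 2) := by
      funext y; ring
    rw [hfun, integral_add h12 ((integrable_exp_neg_mul_sq (hb_pos hs2)).const_mul (m ^ 2)),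
      integral_add (integrable_sq_mul_exp_neg_sq _ (hb_pos hs2))
        ((integrable_mul_exp_neg_mul_sq (hb_pos hs2)).const_mul (2 * m)),
      integral_const_mul, integral_const_mul]
  rw [hadd, integral_mul_exp_neg_sq _ (hb_pos hs2), integral_sq_mul_exp_neg_sq _ (hb_pos hs2),
    integral_gaussian]
  have hs := sqrt_fact (s2 := s2) hs2
  have h2s : (2 * (2 * s2)⁻¹)⁻¹ = s2 := by field_simp
  rw [h2s]
  nlinarith [Real.sqrt_nonneg (2 * π * s2), Real.sqrt_nonneg (π / (2 * s2)⁻¹)]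

lemma gauss_log (u : ℝ) : Real.log (gaussPdf m s2 u)
    = -(1/2) * Real.log (2 * π * s2) - (2 * s2)⁻¹ * (u - m) ^ 2 := by
  rw [gaussPdf_eq, Real.log_mul (by positivity) (Real.exp_pos _).ne', Real.log_exp,
    Real.log_inv, Real.log_sqrt (by positivity)]
  ring

lemma gauss_centered_sq_integrable :
    Integrable (fun u => (u - m) ^ 2 * gaussPdf m s2 u) := by
  have hi : Integrable (fun y => y ^ 2 * Real.exp (-(2 * s2)⁻¹ * y ^ 2)) :=
    integrable_sq_mul_exp_neg_sq _ (hb_pos hs2)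
  have := gauss_shift_integrable (m := m) (s2 := s2) hs2 (f := fun y => y ^ 2) hi
  exact this

lemma gauss_centered_sq_integral :
    (∫ u, (u - m) ^ 2 * gaussPdf m s2 u) = s2 := by
  have h0 := gauss_shift (m := m) hs2 (fun y => y ^ 2)
  beta_reduce at h0
  rw [h0, integral_sq_mul_exp_neg_sq _ (hb_pos hs2)]
  have h2s : (2 * (2 * s2)⁻¹)⁻¹ = s2 := by field_simp
  rw [h2s]
  have hs := sqrt_fact (s2 := s2) hs2
  nlinarith [Real.sqrt_nonneg (2 * π * s2), Real.sqrt_nonneg (π / (2 * s2)⁻¹)]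

lemma gauss_integrable_ent :
    Integrable (fun u => gaussPdf m s2 u * Real.log (gaussPdf m s2 u)) := by
  have h1 := (gauss_integrable (m := m) hs2).const_mul (-(1/2) * Real.log (2 * π * s2))
  have h2 := (gauss_centered_sq_integrable (m := m) hs2).const_mul (2 * s2)⁻¹
  refine (h1.sub h2).congr ?_
  filter_upwards with u
  simp only [Pi.sub_apply]
  rw [gauss_log hs2]
  ring

lemma gauss_integral_ent :
    (∫ u, gaussPdf m s2 u * Real.log (gaussPdf m s2 u))
      = -(1/2) * Real.log (2 * π * s2) - 1/2 := by
  have heq : (fun u => gaussPdf m s2 u * Real.log (gaussPdf m s2 u))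
      = fun u => (-(1/2) * Real.log (2 * π * s2)) * gaussPdf m s2 u
        - (2 * s2)⁻¹ * ((u - m) ^ 2 * gaussPdf m s2 u) := by
    funext u; rw [gauss_log hs2]; ring
  rw [heq, integral_sub ((gauss_integrable hs2).const_mul _)
    ((gauss_centered_sq_integrable hs2).const_mul _), integral_const_mul, integral_const_mul,
    gauss_integral hs2, gauss_centered_sq_integral hs2]
  have : (2 * s2)⁻¹ * s2 = 1/2 := by field_simp
  rw [this, mul_one]

end gauss2

/-- A probability density on ℝ. -/
def IsDensity (p : ℝ → ℝ) : Prop := (∀ u, 0 ≤ p u) ∧ (∫ u, p u) = 1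

lemma dens_integrable {p : ℝ → ℝ} (hp : IsDensity p) : Integrable p := by
  by_contra h
  have h1 := hp.2
  rw [integral_undef h] at h1
  exact one_ne_zero h1.symm

lemma dens_integrable_mul {p : ℝ → ℝ} (hp : IsDensity p)
    (h2 : Integrable (fun u => u ^ 2 * p u)) : Integrable (fun u => u * p u) := by
  refine Integrable.mono' ((dens_integrable hp).add h2) ?_ ?_
  · exact (aestronglyMeasurable_id.mul (dens_integrable hp).aestronglyMeasurable)
  · filter_upwards with u
    simp only [Pi.add_apply, Real.norm_eq_abs, abs_mul]
    have h1 : |p u| = p u := abs_of_nonneg (hp.1 u)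
    rw [h1]
    have : |u| ≤ 1 + u ^ 2 := by nlinarith [abs_nonneg u, sq_abs u]
    nlinarith [hp.1 u, abs_nonneg u]

lemma dens_centered_sq_integrable {p : ℝ → ℝ} (m0 : ℝ) (hp : IsDensity p)
    (h2 : Integrable (fun u => u ^ 2 * p u)) :
    Integrable (fun u => (u - m0) ^ 2 * p u) := by
  have h1 := dens_integrable_mul hp h2
  have h0 := dens_integrable hp
  refine ((h2.sub (h1.const_mul (2 * m0))).add (h0.const_mul (m0 ^ 2))).congr ?_
  filter_upwards with u
  simp only [Pi.add_apply, Pi.sub_apply]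
  ring

lemma dens_centered_sq_integral {p : ℝ → ℝ} (m0 : ℝ) (hp : IsDensity p)
    (h2 : Integrable (fun u => u ^ 2 * p u)) :
    (∫ u, (u - m0) ^ 2 * p u)
      = (∫ u, u ^ 2 * p u) - 2 * m0 * (∫ u, u * p u) + m0 ^ 2 := by
  have h1 := dens_integrable_mul hp h2
  have h0 := dens_integrable hp
  have hfun : (fun u => (u - m0) ^ 2 * p u)
      = fun u => (u ^ 2 * p u - 2 * m0 * (u * p u)) + m0 ^ 2 * p u := by
    funext u; ring
  have h12 : Integrable (fun u => u ^ 2 * p u - 2 * m0 * (u * p u)) :=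
    h2.sub (h1.const_mul (2 * m0))
  rw [hfun, integral_add h12 (h0.const_mul (m0 ^ 2)),
    integral_sub h2 (h1.const_mul (2 * m0)), integral_const_mul, integral_const_mul, hp.2]
  ring

/-- Gibbs' variational principle: the Gaussian minimizes quadratic cost plus entropy. -/
lemma gibbs {α lam m0 : ℝ} (hα : 0 < α) (hlam : 0 < lam) {p : ℝ → ℝ}
    (hp : IsDensity p) (hp2 : Integrable (fun u => u ^ 2 * p u))
    (hpl : Integrable (fun u => p u * Real.log (p u))) :
    α * (∫ u, (u - m0) ^ 2 * gaussPdf m0 (lam / (2 * α)) u)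
        + lam * (∫ u, gaussPdf m0 (lam / (2 * α)) u * Real.log (gaussPdf m0 (lam / (2 * α)) u))
      ≤ α * (∫ u, (u - m0) ^ 2 * p u) + lam * (∫ u, p u * Real.log (p u)) := by
  set s2 := lam / (2 * α) with hs2def
  have hs2 : 0 < s2 := by positivity
  set q := gaussPdf m0 s2 with hqdef
  have hqpos : ∀ u, 0 < q u := fun u => gaussPdf_pos hs2 u
  -- LHS value
  rw [gauss_centered_sq_integral hs2, gauss_integral_ent hs2]
  have hαs2 : α * s2 = lam / 2 := by rw [hs2def]; field_simp
  -- log of q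
  have hlogq : ∀ u, Real.log (q u)
      = -(1/2) * Real.log (2 * π * s2) - (2 * s2)⁻¹ * (u - m0) ^ 2 :=
    fun u => gauss_log hs2 u
  have hinv : lam * (2 * s2)⁻¹ = α := by
    rw [hs2def]; field_simp
  -- p log q integrable
  have hplogq : Integrable (fun u => p u * Real.log (q u)) := by
    have h0 := dens_integrable hp
    have hc := dens_centered_sq_integrable m0 hp hp2
    refine ((h0.const_mul (-(1/2) * Real.log (2 * π * s2))).sub
      (hc.const_mul (2 * s2)⁻¹)).congr ?_
    filter_upwards with u
    simp only [Pi.sub_apply]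
    rw [hlogq u]
    ring
  -- key: α ∫ (u-m0)² p  =  -lam ∫ p log q - (lam/2) log(2π s2)
  have key : α * (∫ u, (u - m0) ^ 2 * p u)
      = -lam * (∫ u, p u * Real.log (q u)) - lam * (1/2) * Real.log (2 * π * s2) := by
    have hc := dens_centered_sq_integrable m0 hp hp2
    have h0 := dens_integrable hp
    have hfun : (fun u => p u * Real.log (q u))
        = fun u => (-(1/2) * Real.log (2 * π * s2)) * p u - (2 * s2)⁻¹ * ((u - m0) ^ 2 * p u) := by
      funext u; rw [hlogq u]; ring
    rw [hfun, integral_sub (h0.const_mul _) (hc.const_mul _), integral_const_mul,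
      integral_const_mul, hp.2]
    rw [show α = lam * (2 * s2)⁻¹ from hinv.symm]; ring
  -- KL divergence nonnegativity
  have hpw : ∀ u, p u - q u ≤ p u * Real.log (p u) - p u * Real.log (q u) := by
    intro u
    rcases eq_or_lt_of_le (hp.1 u) with h0 | h0
    · rw [← h0]
      simp only [zero_mul, zero_sub, sub_zero, zero_mul]
      linarith [(hqpos u).le]
    · have hq := hqpos u
      have hlog := Real.log_le_sub_one_of_pos (div_pos hq h0)
      rw [Real.log_div hq.ne' h0.ne'] at hlog
      have hqp : p u * (q u / p u) = q u := by field_simp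
      nlinarith [mul_le_mul_of_nonneg_left hlog h0.le]
  have hqint := gauss_integrable (m := m0) hs2
  have h0int := dens_integrable hp
  have hmono : (∫ u, (p u - q u)) ≤ ∫ u, (p u * Real.log (p u) - p u * Real.log (q u)) :=
    integral_mono (h0int.sub hqint) (hpl.sub hplogq) (fun u => hpw u)
  rw [integral_sub h0int hqint, integral_sub hpl hplogq, hp.2, gauss_integral hs2] at hmono
  nlinarith [key, hαs2, hmono, hlam.le]

/-- One step of the exploratory MV Bellman operator. -/
noncomputable def stepVal {Ω : Type*} [MeasurableSpace Ω] (μ : Measure Ω)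
    (r : Ω → ℝ) (rf lam : ℝ) (Vnext : ℝ → ℝ) (x : ℝ) (p : ℝ → ℝ) : ℝ :=
  (∫ ω, ∫ u, Vnext (rf * x + r ω * u) * p u ∂volume ∂μ) +
    lam * ∫ u, p u * Real.log (p u)

section step
variable {Ω : Type*} [MeasurableSpace Ω] (μ : Measure Ω) [IsProbabilityMeasure μ]
  (r : Ω → ℝ) (hmeas : Measurable r)
  (a σ rf lam : ℝ) (hσ : 0 < σ) (hlam : 0 < lam) (hrf : 0 < rf)
  (hra : ∫ ω, r ω ∂μ = a) (hrv : ∫ ω, (r ω) ^ 2 ∂μ = a ^ 2 + σ ^ 2)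

include hmeas hσ hlam hrf hra hrv

lemma r2_integrable : Integrable (fun ω => (r ω) ^ 2) μ := by
  by_contra h
  rw [integral_undef h] at hrv
  nlinarith

lemma r_integrable : Integrable r μ := by
  refine Integrable.mono' ((integrable_const (1:ℝ)).add
    (r2_integrable μ r hmeas a σ rf lam hσ hlam hrf hra hrv)) hmeas.aestronglyMeasurable ?_
  filter_upwards with ω
  simp only [Pi.add_apply, Real.norm_eq_abs]
  nlinarith [abs_nonneg (r ω), sq_abs (r ω)]

lemma stepVal_expand (C m D x : ℝ) (Vn : ℝ → ℝ) (hV : ∀ y, Vn y = C * (y - m) ^ 2 + D)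
    (p : ℝ → ℝ) (hp : IsDensity p) (hp2 : Integrable (fun u => u ^ 2 * p u)) :
    stepVal μ r rf lam Vn x p
      = C * (rf * x - m) ^ 2 + 2 * C * a * (rf * x - m) * (∫ u, u * p u)
        + C * (a ^ 2 + σ ^ 2) * (∫ u, u ^ 2 * p u) + D
        + lam * (∫ u, p u * Real.log (p u)) := by
  have hp0 := dens_integrable hp
  have hp1 := dens_integrable_mul hp hp2
  have hinner : ∀ ω, (∫ u, Vn (rf * x + r ω * u) * p u)
      = (C * (rf * x - m) ^ 2 + D)
        + ((∫ u, u * p u) * (2 * C * (rf * x - m))) * r ω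
        + ((∫ u, u ^ 2 * p u) * C) * (r ω) ^ 2 := by
    intro ω
    have hfun : (fun u => Vn (rf * x + r ω * u) * p u)
        = fun u => ((C * (rf * x - m) ^ 2 + D) * p u
            + (2 * C * (rf * x - m) * r ω) * (u * p u))
          + (C * (r ω) ^ 2) * (u ^ 2 * p u) := by
      funext u; rw [hV]; ring
    have h12 : Integrable (fun u => (C * (rf * x - m) ^ 2 + D) * p u
        + (2 * C * (rf * x - m) * r ω) * (u * p u)) :=
      (hp0.const_mul _).add (hp1.const_mul _)
    rw [hfun, integral_add h12 (hp2.const_mul _),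
      integral_add (hp0.const_mul _) (hp1.const_mul _),
      integral_const_mul, integral_const_mul, integral_const_mul, hp.2]
    ring
  rw [stepVal]
  have houter : (∫ ω, ∫ u, Vn (rf * x + r ω * u) * p u ∂volume ∂μ)
      = (∫ ω, ((C * (rf * x - m) ^ 2 + D)
        + ((∫ u, u * p u) * (2 * C * (rf * x - m))) * r ω)
        + ((∫ u, u ^ 2 * p u) * C) * (r ω) ^ 2 ∂μ) := by
    congr 1; funext ω; rw [hinner ω]
  have hri : Integrable r μ := r_integrable μ r hmeas a σ rf lam hσ hlam hrf hra hrv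
  have hr2i := r2_integrable μ r hmeas a σ rf lam hσ hlam hrf hra hrv
  have h12 : Integrable (fun ω => (C * (rf * x - m) ^ 2 + D)
      + ((∫ u, u * p u) * (2 * C * (rf * x - m))) * r ω) μ :=
    (integrable_const _).add (hri.const_mul _)
  rw [houter, integral_add h12 (hr2i.const_mul _),
    integral_add (integrable_const _) (hri.const_mul _),
    integral_const_mul, integral_const_mul, integral_const, hra, hrv]
  simp [measure_univ]
  ring

lemma step_main (C m D : ℝ) (hC : 0 < C) (Vn Vt : ℝ → ℝ)
    (hV : ∀ y, Vn y = C * (y - m) ^ 2 + D)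
    (hVt : ∀ x, Vt x = sInf {J : ℝ | ∃ p : ℝ → ℝ, IsDensity p ∧
        Integrable (fun u => u ^ 2 * p u) ∧
        Integrable (fun u => p u * Real.log (p u)) ∧
        J = stepVal μ r rf lam Vn x p}) (x : ℝ) :
    (Vt x = stepVal μ r rf lam Vn x
        (gaussPdf (-(a * (rf * x - m)) / (a ^ 2 + σ ^ 2))
          (lam / (2 * (C * (a ^ 2 + σ ^ 2)))))) ∧
    (∀ p : ℝ → ℝ, IsDensity p → Integrable (fun u => u ^ 2 * p u) →
        Integrable (fun u => p u * Real.log (p u)) →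
        stepVal μ r rf lam Vn x
          (gaussPdf (-(a * (rf * x - m)) / (a ^ 2 + σ ^ 2))
            (lam / (2 * (C * (a ^ 2 + σ ^ 2))))) ≤ stepVal μ r rf lam Vn x p) ∧
    (Vt x = (σ ^ 2 * rf ^ 2 / (a ^ 2 + σ ^ 2)) * C * (x - m / rf) ^ 2
        + (D - lam / 2 * Real.log (π * lam / (C * (a ^ 2 + σ ^ 2))))) := by
  set K := a ^ 2 + σ ^ 2 with hKdef
  have hK : 0 < K := by positivity
  have hα : 0 < C * K := by positivity
  set m0 := -(a * (rf * x - m)) / K with hm0def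
  set s2 := lam / (2 * (C * K)) with hs2def
  have hs2 : 0 < s2 := by rw [hs2def]; positivity
  set q := gaussPdf m0 s2 with hqdef
  have hqd : IsDensity q := ⟨fun u => gaussPdf_nonneg u, gauss_integral hs2⟩
  have hq2 : Integrable (fun u => u ^ 2 * q u) := gauss_integrable_sq hs2
  have hql : Integrable (fun u => q u * Real.log (q u)) := gauss_integrable_ent hs2
  have hm0 : (C * K) * m0 = -(C * a * (rf * x - m)) := by
    rw [hm0def]; field_simp
  have hID : ∀ ρ : ℝ → ℝ, IsDensity ρ → Integrable (fun u => u ^ 2 * ρ u) →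
      2 * C * a * (rf * x - m) * (∫ u, u * ρ u) + C * K * (∫ u, u ^ 2 * ρ u)
        = (C * K) * (∫ u, (u - m0) ^ 2 * ρ u) - (C * K) * m0 ^ 2 := by
    intro ρ hρ h2
    rw [dens_centered_sq_integral m0 hρ h2]
    linear_combination (2 * (∫ u, u * ρ u)) * hm0
  have hmin : ∀ p : ℝ → ℝ, IsDensity p → Integrable (fun u => u ^ 2 * p u) →
      Integrable (fun u => p u * Real.log (p u)) →
      stepVal μ r rf lam Vn x q ≤ stepVal μ r rf lam Vn x p := by
    intro p hp hp2 hpl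
    rw [stepVal_expand μ r hmeas a σ rf lam hσ hlam hrf hra hrv C m D x Vn hV q hqd hq2,
      stepVal_expand μ r hmeas a σ rf lam hσ hlam hrf hra hrv C m D x Vn hV p hp hp2]
    simp only [← hKdef]
    have hgibbs := gibbs (m0 := m0) hα hlam hp hp2 hpl
    rw [← hs2def, ← hqdef] at hgibbs
    have hIq := hID q hqd hq2
    have hIp := hID p hp hp2
    linarith
  have hval : stepVal μ r rf lam Vn x q
      = (σ ^ 2 * rf ^ 2 / K) * C * (x - m / rf) ^ 2
        + (D - lam / 2 * Real.log (π * lam / (C * K))) := by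
    rw [stepVal_expand μ r hmeas a σ rf lam hσ hlam hrf hra hrv C m D x Vn hV q hqd hq2,
      hqdef, gauss_integral_mul hs2, gauss_integral_sq hs2, gauss_integral_ent hs2]
    simp only [← hKdef]
    have harg : 2 * π * s2 = π * lam / (C * K) := by
      rw [hs2def]; field_simp
    rw [harg]
    have hCKs2 : C * K * s2 = lam / 2 := by
      rw [hs2def]; field_simp
    have hsq : rf ^ 2 * (x - m / rf) ^ 2 = (rf * x - m) ^ 2 := by
      have hrfm : rf * (x - m / rf) = rf * x - m := by field_simp
      rw [← hrfm]; ring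
    have hfin : C * (rf * x - m) ^ 2 + 2 * C * a * (rf * x - m) * m0 + C * K * m0 ^ 2
        = C * σ ^ 2 * (rf * x - m) ^ 2 / K := by
      rw [hm0def, hKdef]
      field_simp
      ring
    linear_combination hfin + hCKs2 - (C * σ ^ 2 / K) * hsq
  have hmem : stepVal μ r rf lam Vn x q ∈ {J : ℝ | ∃ p : ℝ → ℝ, IsDensity p ∧
      Integrable (fun u => u ^ 2 * p u) ∧
      Integrable (fun u => p u * Real.log (p u)) ∧
      J = stepVal μ r rf lam Vn x p} := ⟨q, hqd, hq2, hql, rfl⟩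
  have hlb : ∀ J ∈ {J : ℝ | ∃ p : ℝ → ℝ, IsDensity p ∧
      Integrable (fun u => u ^ 2 * p u) ∧
      Integrable (fun u => p u * Real.log (p u)) ∧
      J = stepVal μ r rf lam Vn x p}, stepVal μ r rf lam Vn x q ≤ J := by
    rintro J ⟨p, hp, h2, hl, rfl⟩
    exact hmin p hp h2 hl
  have h1 : Vt x = stepVal μ r rf lam Vn x q := by
    rw [hVt x]
    exact le_antisymm (csInf_le ⟨_, hlb⟩ hmem) (le_csInf ⟨_, hmem⟩ hlb)
  exact ⟨h1, hmin, by rw [h1, hval]⟩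

end step

/-- Optimal policy of the discrete-time exploratory MV problem: the minimizing density
at time `t`, state `x` is Gaussian with mean `-a r_f (x - r_f^{-(T-t)} w)/(a²+σ²)` and
variance `(λ/(2(a²+σ²))) ((a²+σ²)/(σ²r_f²))^{T-t-1}`. -/
theorem stmt6 {Ω : Type*} [MeasurableSpace Ω] (μ : Measure Ω) [IsProbabilityMeasure μ]
    (r : Ω → ℝ) (hmeas : Measurable r)
    (a σ rf lam w b : ℝ) (hσ : 0 < σ) (hlam : 0 < lam) (hrf : 0 < rf)
    (hra : ∫ ω, r ω ∂μ = a) (hrv : ∫ ω, (r ω) ^ 2 ∂μ = a ^ 2 + σ ^ 2)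
    (T : ℕ) (hT : 0 < T) (V : ℕ → ℝ → ℝ)
    (hVT : ∀ x, V T x = (x - w) ^ 2 - (w - b) ^ 2)
    (hrec : ∀ t < T, ∀ x, V t x =
      sInf {J : ℝ | ∃ p : ℝ → ℝ, IsDensity p ∧
        Integrable (fun u => u ^ 2 * p u) ∧
        Integrable (fun u => p u * Real.log (p u)) ∧
        J = stepVal μ r rf lam (V (t + 1)) x p}) :
    ∀ t < T, ∀ x,
      -- the Gaussian policy attains the minimum in the Bellman recursion at (t, x) ...
      V t x = stepVal μ r rf lam (V (t + 1)) x
        (gaussPdf (-(a * rf * (x - (rf⁻¹) ^ (T - t) * w)) / (a ^ 2 + σ ^ 2))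
          (lam / (2 * (a ^ 2 + σ ^ 2)) *
            ((a ^ 2 + σ ^ 2) / (σ ^ 2 * rf ^ 2)) ^ (T - t - 1))) ∧
      -- ... i.e. it minimizes among all admissible densities
      (∀ p : ℝ → ℝ, IsDensity p →
        Integrable (fun u => u ^ 2 * p u) →
        Integrable (fun u => p u * Real.log (p u)) →
        stepVal μ r rf lam (V (t + 1)) x
          (gaussPdf (-(a * rf * (x - (rf⁻¹) ^ (T - t) * w)) / (a ^ 2 + σ ^ 2))
            (lam / (2 * (a ^ 2 + σ ^ 2)) *
              ((a ^ 2 + σ ^ 2) / (σ ^ 2 * rf ^ 2)) ^ (T - t - 1))) ≤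
          stepVal μ r rf lam (V (t + 1)) x p) := by
  have main : ∀ k, k ≤ T → ∃ Dk : ℝ, ∀ x, V (T - k) x
      = (σ ^ 2 * rf ^ 2 / (a ^ 2 + σ ^ 2)) ^ k * (x - (rf⁻¹) ^ k * w) ^ 2 + Dk := by
    intro k
    induction k with
    | zero =>
      intro _
      refine ⟨-(w - b) ^ 2, fun x => ?_⟩
      rw [Nat.sub_zero, hVT x]
      simp only [pow_zero, one_mul]
      ring
    | succ k ih =>
      intro hk1
      obtain ⟨Dk, hDk⟩ := ih (Nat.le_of_succ_le hk1)
      have ht : T - (k + 1) < T := Nat.sub_lt hT (Nat.succ_pos k)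
      have hidx : T - (k + 1) + 1 = T - k := by omega
      have hVt : ∀ x, V (T - (k + 1)) x = sInf {J : ℝ | ∃ p : ℝ → ℝ, IsDensity p ∧
          Integrable (fun u => u ^ 2 * p u) ∧
          Integrable (fun u => p u * Real.log (p u)) ∧
          J = stepVal μ r rf lam (V (T - k)) x p} := by
        intro x
        have h := hrec (T - (k + 1)) ht x
        rwa [hidx] at h
      have hstep := step_main μ r hmeas a σ rf lam hσ hlam hrf hra hrv
        ((σ ^ 2 * rf ^ 2 / (a ^ 2 + σ ^ 2)) ^ k) ((rf⁻¹) ^ k * w) Dk (by positivity)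
        (V (T - k)) (V (T - (k + 1))) hDk hVt
      refine ⟨Dk - lam / 2 * Real.log (π * lam /
        ((σ ^ 2 * rf ^ 2 / (a ^ 2 + σ ^ 2)) ^ k * (a ^ 2 + σ ^ 2))), fun x => ?_⟩
      rw [(hstep x).2.2]
      have hm' : ((rf⁻¹) ^ k * w) / rf = (rf⁻¹) ^ (k + 1) * w := by
        rw [pow_succ]
        field_simp
      rw [hm', pow_succ]
      ring
  intro t ht x
  set k := T - t - 1 with hk
  have hk1 : k + 1 = T - t := by omega
  have hTk : T - k = t + 1 := by omega
  obtain ⟨Dk, hDk⟩ := main k (by omega)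
  rw [hTk] at hDk
  have hstep := step_main μ r hmeas a σ rf lam hσ hlam hrf hra hrv
    ((σ ^ 2 * rf ^ 2 / (a ^ 2 + σ ^ 2)) ^ k) ((rf⁻¹) ^ k * w) Dk (by positivity)
    (V (t + 1)) (V t) hDk (hrec t ht) x
  have hmean : -(a * (rf * x - (rf⁻¹) ^ k * w)) / (a ^ 2 + σ ^ 2)
      = -(a * rf * (x - (rf⁻¹) ^ (T - t) * w)) / (a ^ 2 + σ ^ 2) := by
    rw [← hk1, pow_succ]
    congr 1
    field_simp
    have h1 : (1 / rf) ^ (k + 1) * rf = (1 / rf) ^ k := by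
      rw [pow_succ, mul_assoc, one_div_mul_cancel hrf.ne', mul_one]
    linear_combination (-(a * w)) * h1
  have hvar : lam / (2 * ((σ ^ 2 * rf ^ 2 / (a ^ 2 + σ ^ 2)) ^ k * (a ^ 2 + σ ^ 2)))
      = lam / (2 * (a ^ 2 + σ ^ 2)) * ((a ^ 2 + σ ^ 2) / (σ ^ 2 * rf ^ 2)) ^ (T - t - 1) := by
    rw [← hk, show ((a ^ 2 + σ ^ 2) / (σ ^ 2 * rf ^ 2))
      = (σ ^ 2 * rf ^ 2 / (a ^ 2 + σ ^ 2))⁻¹ from by rw [inv_div], inv_pow]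
    have hG : (0:ℝ) < (σ ^ 2 * rf ^ 2 / (a ^ 2 + σ ^ 2)) ^ k := by positivity
    field_simp
  rw [← hmean, ← hvar]
  exact ⟨(hstep).1, (hstep).2.1⟩
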